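/- Let $0<p<q<\infty$ and let $(\lambda_k)_{k\in\mathbb{N}}$ be a positive non-increasing sequence. Assume $m_0>n$ is an integer such that $\frac{m_0-n}{(\sum_{k=1}^{m_0}\lambda_k^{-p})^{q/p}}\geq \frac{m_0+1-n}{(\sum_{k=1}^{m_0+1}\lambda_k^{-p})^{q/p}}$. Then also $\frac{m_0+1-n}{(\sum_{k=1}^{m_0+1}\lambda_k^{-p})^{q/p}}\geq \frac{m_0+2-n}{(\sum_{k=1}^{m_0+2}\lambda_k^{-p})^{q/p}}$. -/

import Mathlib

open Finset

/-- Key convexity inequality: for `0 ≤ y ≤ 1` and `1 ≤ r`, `2 - y ^ r ≤ (2 - y) ^ r`. -/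
lemma key_convex_ineq {y r : ℝ} (hy0 : 0 ≤ y) (hy1 : y ≤ 1) (hr : 1 ≤ r) :
    2 - y ^ r ≤ (2 - y) ^ r := by
  have hcv := convexOn_rpow hr
  have h2y : (0:ℝ) ≤ 2 - y := by linarith
  have := hcv.2 (Set.mem_Ici.mpr hy0) (Set.mem_Ici.mpr h2y)
      (by norm_num : (0:ℝ) ≤ (1:ℝ)/2) (by norm_num : (0:ℝ) ≤ (1:ℝ)/2) (by norm_num)
  simp only [smul_eq_mul] at this
  have heq : (1:ℝ)/2 * y + 1/2 * (2 - y) = 1 := by ring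
  rw [heq, Real.one_rpow] at this
  linarith

theorem ratio_stays_nonincreasing
    (p q : ℝ) (hp : 0 < p) (hpq : p < q) (l : ℕ → ℝ) (hl : ∀ k, 0 < l k)
    (hmono : Antitone l) (n m₀ : ℕ) (hn : 1 ≤ n) (h : n < m₀)
    (hyp : ((m₀ : ℝ) + 1 - n) / (∑ k ∈ Finset.Icc 1 (m₀ + 1), l k ^ (-p)) ^ (q / p) ≤
        ((m₀ : ℝ) - n) / (∑ k ∈ Finset.Icc 1 m₀, l k ^ (-p)) ^ (q / p)) :
    ((m₀ : ℝ) + 2 - n) / (∑ k ∈ Finset.Icc 1 (m₀ + 2), l k ^ (-p)) ^ (q / p) ≤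
      ((m₀ : ℝ) + 1 - n) / (∑ k ∈ Finset.Icc 1 (m₀ + 1), l k ^ (-p)) ^ (q / p) := by
  set r : ℝ := q / p with hr_def
  have hr : 1 < r := (one_lt_div hp).mpr hpq
  set S : ℝ := ∑ k ∈ Finset.Icc 1 m₀, l k ^ (-p) with hS_def
  set A : ℝ := l (m₀ + 1) ^ (-p) with hA_def
  set B : ℝ := l (m₀ + 2) ^ (-p) with hB_def
  have hm1 : m₀ + 1 = m₀ + 1 := rfl
  have hsum1 : (∑ k ∈ Finset.Icc 1 (m₀ + 1), l k ^ (-p)) = S + A := by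
    rw [Finset.sum_Icc_succ_top (by omega : 1 ≤ m₀ + 1)]
  have hsum2 : (∑ k ∈ Finset.Icc 1 (m₀ + 2), l k ^ (-p)) = S + A + B := by
    rw [show m₀ + 2 = (m₀ + 1) + 1 from rfl,
      Finset.sum_Icc_succ_top (by omega : 1 ≤ m₀ + 1 + 1), hsum1]
  have hS : 0 < S := by
    apply Finset.sum_pos
    · intro k _; exact Real.rpow_pos_of_pos (hl k) _
    · exact ⟨1, Finset.mem_Icc.mpr ⟨le_refl 1, by omega⟩⟩
  have hA : 0 < A := Real.rpow_pos_of_pos (hl _) _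
  have hB : 0 < B := Real.rpow_pos_of_pos (hl _) _
  have hAB : A ≤ B :=
    Real.rpow_le_rpow_of_nonpos (hl _) (hmono (by omega : m₀ + 1 ≤ m₀ + 2))
      (by linarith : -p ≤ 0)
  set M : ℝ := (m₀ : ℝ) - n with hM_def
  have hM : 0 < M := by
    have : (n : ℝ) < m₀ := Nat.cast_lt.mpr h
    simp [hM_def]; linarith
  rw [hsum1] at hyp ⊢
  rw [hsum2]
  -- positivity of the rpow denominators
  have hSr : 0 < S ^ r := Real.rpow_pos_of_pos hS r
  have hSAr : 0 < (S + A) ^ r := Real.rpow_pos_of_pos (by linarith) r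
  have hSABr : 0 < (S + A + B) ^ r := Real.rpow_pos_of_pos (by linarith) r
  -- from hyp: (M+1) * S^r ≤ M * (S+A)^r
  have hyp' : (M + 1) * S ^ r ≤ M * (S + A) ^ r := by
    have := (div_le_div_iff₀ hSAr hSr).mp hyp
    have e : (m₀ : ℝ) + 1 - n = M + 1 := by simp [hM_def]; ring
    rw [e] at this; linarith [this]
  -- y = S/(S+A) ∈ (0,1], y^r ≤ M/(M+1)
  set y : ℝ := S / (S + A) with hy_def
  have hy0 : 0 ≤ y := le_of_lt (div_pos hS (by linarith))
  have hy1 : y ≤ 1 := by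
    rw [hy_def, div_le_one (by linarith)]; linarith
  have hyr : y ^ r ≤ M / (M + 1) := by
    rw [hy_def, Real.div_rpow hS.le (by linarith : (0:ℝ) ≤ S + A),
      div_le_div_iff₀ hSAr (by linarith : (0:ℝ) < M + 1)]
    linarith [hyp']
  have h2y : 2 - y = (S + 2 * A) / (S + A) := by
    rw [hy_def]; field_simp; ring
  have hkey := key_convex_ineq hy0 hy1 hr.le
  rw [h2y, Real.div_rpow (by linarith : (0:ℝ) ≤ S + 2*A) (by linarith : (0:ℝ) ≤ S + A)] at hkey
  have hS2Ar : 0 < (S + 2 * A) ^ r := Real.rpow_pos_of_pos (by linarith) r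
  -- (M+2)/(M+1) ≤ (S+2A)^r / (S+A)^r
  have hmain : (M + 2) * (S + A) ^ r ≤ (M + 1) * (S + 2 * A) ^ r := by
    have h1 : (M + 2) / (M + 1) ≤ (S + 2 * A) ^ r / (S + A) ^ r := by
      have : (M + 2) / (M + 1) ≤ 2 - y ^ r := by
        have h2 : (M + 2) / (M + 1) = 2 - M / (M + 1) := by
          field_simp; ring
        rw [h2]; linarith
      linarith
    rw [div_le_div_iff₀ (by linarith : (0:ℝ) < M + 1) hSAr] at h1
    linarith
  have hmono2 : (S + 2 * A) ^ r ≤ (S + A + B) ^ r :=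
    Real.rpow_le_rpow (by linarith) (by linarith) (by linarith)
  have e2 : (m₀ : ℝ) + 2 - n = M + 2 := by simp [hM_def]; ring
  have e1 : (m₀ : ℝ) + 1 - n = M + 1 := by simp [hM_def]; ring
  rw [e1, e2, div_le_div_iff₀ hSABr hSAr]
  nlinarith [hmain, hmono2, hM]
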